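/- Let n ≥ 1 be an integer, let α : Fin n → ℝ with αᵢ > 0 for all i, let T₀ and D be reals with T₀ < D, and let S = Σᵢ αᵢ. Set σ* = S/(D − T₀). Then the assignment σᵢ = σ* for all i satisfies T₀ + Σᵢ αᵢ/σᵢ = D, and for every σ : Fin n → ℝ with σᵢ > 0 for all i and T₀ + Σᵢ αᵢ/σᵢ ≤ D, one has Σᵢ αᵢ·(σ*)² ≤ Σᵢ αᵢ·σᵢ², with equality if and only if σᵢ = σ* for all i. -/

import Mathlib

private lemma tangent_key (a b : ℝ) (ha : 0 < a) (hb : 0 < b) :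
    3*b^2 - 2*b^3/a ≤ a^2 ∧ (a^2 = 3*b^2 - 2*b^3/a ↔ a = b) := by
  have h1 : a^2 - (3*b^2 - 2*b^3/a) = (a-b)^2*(a+2*b)/a := by
    field_simp; ring
  have hnn : 0 ≤ (a-b)^2*(a+2*b)/a :=
    div_nonneg (mul_nonneg (sq_nonneg _) (by linarith)) ha.le
  constructor
  · linarith
  · constructor
    · intro h
      have h2 : (a-b)^2*(a+2*b)/a = 0 := by linarith
      have h3 : (a-b)^2*(a+2*b) = 0 := by
        rcases div_eq_zero_iff.mp h2 with h' | h'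
        · exact h'
        · exact absurd h' ha.ne'
      rcases mul_eq_zero.mp h3 with h' | h'
      · have := sq_eq_zero_iff.mp h'
        linarith
      · linarith
    · intro h; subst h
      field_simp; ring

theorem stmt_7 (n : ℕ) (hn : 1 ≤ n) (α : Fin n → ℝ) (hα : ∀ i, 0 < α i)
    (T0 D : ℝ) (hTD : T0 < D) (σstar : ℝ)
    (hσstar : σstar = (∑ i, α i) / (D - T0)) :
    T0 + ∑ i, α i / σstar = D ∧
    ∀ σ : Fin n → ℝ, (∀ i, 0 < σ i) → T0 + ∑ i, α i / σ i ≤ D →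
      ∑ i, α i * σstar ^ 2 ≤ ∑ i, α i * (σ i) ^ 2 ∧
      (∑ i, α i * σstar ^ 2 = ∑ i, α i * (σ i) ^ 2 ↔ ∀ i, σ i = σstar) := by
  have hd : 0 < D - T0 := by linarith
  haveI : Nonempty (Fin n) := ⟨⟨0, by omega⟩⟩
  have hne : (Finset.univ : Finset (Fin n)).Nonempty := Finset.univ_nonempty
  have hS : 0 < ∑ i, α i := Finset.sum_pos (fun i _ => hα i) hne
  have hσs : 0 < σstar := by rw [hσstar]; positivity
  have htight : (∑ i, α i) / σstar = D - T0 := by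
    rw [hσstar]
    field_simp
  have part1 : T0 + ∑ i, α i / σstar = D := by
    rw [← Finset.sum_div, htight]; ring
  refine ⟨part1, fun σ hσ hcon => ?_⟩
  have hcon' : ∑ i, α i / σ i ≤ D - T0 := by linarith
  -- termwise: α i * (3σ*² - 2σ*³/σᵢ) ≤ α i * σᵢ²
  have hterm : ∀ i, α i * (3*σstar^2 - 2*σstar^3/(σ i)) ≤ α i * (σ i)^2 := fun i =>
    mul_le_mul_of_nonneg_left (tangent_key (σ i) σstar (hσ i) hσs).1 (hα i).le
  have hsum1 : ∑ i, α i * (3*σstar^2 - 2*σstar^3/(σ i)) ≤ ∑ i, α i * (σ i)^2 :=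
    Finset.sum_le_sum (fun i _ => hterm i)
  have hsum2 : ∑ i, α i * σstar ^ 2 ≤ ∑ i, α i * (3*σstar^2 - 2*σstar^3/(σ i)) := by
    have hexp : ∑ i, α i * (3*σstar^2 - 2*σstar^3/(σ i))
        = 3*σstar^2 * (∑ i, α i) - 2*σstar^3 * (∑ i, α i / σ i) := by
      rw [Finset.mul_sum, Finset.mul_sum, ← Finset.sum_sub_distrib]
      congr 1; ext i; field_simp
    rw [hexp]
    have hSs : σstar * (D - T0) = ∑ i, α i := by
      rw [hσstar]; field_simp
    have h1 : 2*σstar^3 * (∑ i, α i / σ i) ≤ 2*σstar^3 * (D - T0) := by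
      apply mul_le_mul_of_nonneg_left hcon'; positivity
    have h2 : ∑ i, α i * σstar ^ 2 = σstar^2 * (∑ i, α i) := by
      rw [Finset.mul_sum]; congr 1; ext i; ring
    nlinarith [hSs]
  refine ⟨le_trans hsum2 hsum1, ?_, ?_⟩
  · intro heq
    have heq2 : ∑ i, (α i * (σ i)^2 - α i * (3*σstar^2 - 2*σstar^3/(σ i))) = 0 := by
      rw [Finset.sum_sub_distrib]
      have := le_antisymm hsum1 (by linarith : ∑ i, α i * (σ i)^2 ≤ ∑ i, α i * (3*σstar^2 - 2*σstar^3/(σ i)))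
      linarith
    have hzero := (Finset.sum_eq_zero_iff_of_nonneg
      (fun i _ => by linarith [hterm i])).mp heq2
    intro i
    have hi := hzero i (Finset.mem_univ i)
    have : (σ i)^2 = 3*σstar^2 - 2*σstar^3/(σ i) := by
      have hαi := hα i
      nlinarith [hi]
    exact (tangent_key (σ i) σstar (hσ i) hσs).2.mp this
  · intro h
    apply Finset.sum_congr rfl
    intro i _
    rw [h i]
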